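/- In the online dictionary learning algorithm, if D_t minimizes the surrogate f̂_t over C and D_{t+1} minimizes f̂_{t+1} over C, where f̂_t(D) = (1/t)((1/2)Tr(DᵀD A_t) − Tr(Dᵀ B_t)) with A_t = ∑_{i≤t} α_i α_iᵀ, B_t = ∑_{i≤t} x_i α_iᵀ, and if (1/t)A_t has smallest eigenvalue ≥ κ₁ > 0 and the vectors x_i, α_i are uniformly bounded, then ‖D_{t+1} − D_t‖_F = O(1/t). -/

import Mathlib

open Finset Matrix

private lemma aux_diff_bound (t M X a : ℝ) (ht1 : 1 ≤ t) (hX : |X| ≤ t*M^2) (ha : |a| ≤ M^2) :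
    |(1/t)*X - (1/(t+1))*(X + a)| ≤ 2*M^2/t := by
  have ht0 : 0 < t := by linarith
  have ht10 : 0 < t + 1 := by linarith
  have e1 : (1/t)*X - (1/(t+1))*(X + a) = (X - t*a)/(t*(t+1)) := by
    field_simp; ring
  rw [e1, abs_div, abs_of_pos (mul_pos ht0 ht10), div_le_div_iff₀ (mul_pos ht0 ht10) ht0]
  have hnum : |X - t*a| ≤ 2*t*M^2 := by
    rw [abs_le] at hX ha ⊢
    constructor <;> nlinarith [ht0, ht1]
  nlinarith [mul_le_mul_of_nonneg_right hnum ht0.le, sq_nonneg M, ht0, mul_pos ht0 ht0]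

set_option maxHeartbeats 2000000 in
/-- Asymptotic variations of the dictionary iterates: if `D_t` minimizes the surrogate
`f̂_t(D) = (1/t)((1/2)Tr(DᵀD A_t) − Tr(Dᵀ B_t))` over the constraint set, `(1/t)A_t`
has smallest eigenvalue `≥ κ₁ > 0`, and the data `x_i` and coefficients `α_i` are
uniformly bounded, then `‖D_{t+1} − D_t‖_F = O(1/t)`. -/
theorem dictionary_iterates_variation (m k : ℕ)
    (x : ℕ → Fin m → ℝ) (α : ℕ → Fin k → ℝ)
    (M : ℝ) (hbound : ∀ i : ℕ, (∀ p, |x i p| ≤ M) ∧ (∀ j, |α i j| ≤ M))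
    (A : ℕ → Matrix (Fin k) (Fin k) ℝ)
    (hA : ∀ t j j', A t j j' = ∑ i ∈ Finset.Icc 1 t, α i j * α i j')
    (B : ℕ → Matrix (Fin m) (Fin k) ℝ)
    (hB : ∀ t p j, B t p j = ∑ i ∈ Finset.Icc 1 t, x i p * α i j)
    (fhat : ℕ → Matrix (Fin m) (Fin k) ℝ → ℝ)
    (hfhat : ∀ t D, fhat t D =
        (1 / (t : ℝ)) * ((1/2) * Matrix.trace (Dᵀ * D * A t) - Matrix.trace (Dᵀ * B t)))
    (C : Set (Matrix (Fin m) (Fin k) ℝ))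
    (hC : C = {D | ∀ j : Fin k, ∑ i, (D i j)^2 ≤ 1})
    (Dseq : ℕ → Matrix (Fin m) (Fin k) ℝ)
    (hDmin : ∀ t : ℕ, 1 ≤ t → Dseq t ∈ C ∧ ∀ E ∈ C, fhat t (Dseq t) ≤ fhat t E)
    (κ₁ : ℝ) (hκ₁ : 0 < κ₁)
    (heig : ∀ t : ℕ, 1 ≤ t → ∀ v : Fin k → ℝ,
        ∑ j, ∑ j', v j * A t j j' * v j' ≥ (t : ℝ) * κ₁ * ∑ j, (v j)^2) :
    ∃ c : ℝ, ∀ t : ℕ, 1 ≤ t →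
      Real.sqrt (∑ i, ∑ j, (Dseq (t+1) i j - Dseq t i j)^2) ≤ c / (t : ℝ) := by
  refine ⟨8*M^2*m*k*(k+1)/κ₁, ?_⟩
  intro t ht
  have ht0 : (0:ℝ) < t := by exact_mod_cast ht
  have ht1 : (1:ℝ) ≤ t := by exact_mod_cast ht
  have ht10 : (0:ℝ) < (t:ℝ)+1 := by linarith
  obtain ⟨hD1C, hD1min⟩ := hDmin t ht
  obtain ⟨hD2C, hD2min⟩ := hDmin (t+1) (by omega)
  have hD1C' : ∀ j, ∑ i, (Dseq t i j)^2 ≤ 1 := by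
    have := hD1C; rw [hC] at this; exact this
  have hD2C' : ∀ j, ∑ i, (Dseq (t+1) i j)^2 ≤ 1 := by
    have := hD2C; rw [hC] at this; exact this
  set N := Real.sqrt (∑ i, ∑ j, (Dseq (t+1) i j - Dseq t i j)^2) with hNdef
  have hsnn : 0 ≤ ∑ i, ∑ j, (Dseq (t+1) i j - Dseq t i j)^2 := by positivity
  have hN0 : 0 ≤ N := Real.sqrt_nonneg _
  have hNsq : N^2 = ∑ i, ∑ j, (Dseq (t+1) i j - Dseq t i j)^2 := by
    rw [hNdef]; exact Real.sq_sqrt hsnn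
  -- entry bounds
  have entry1 : ∀ (D : Matrix (Fin m) (Fin k) ℝ), (∀ j, ∑ i, (D i j)^2 ≤ 1) →
      ∀ p j, |D p j| ≤ 1 := by
    intro D hD p j
    rw [← Real.sqrt_one, ← Real.sqrt_sq_eq_abs]
    apply Real.sqrt_le_sqrt
    exact le_trans (Finset.single_le_sum (fun i _ => sq_nonneg (D i j)) (Finset.mem_univ p)) (hD j)
  have hD1e := entry1 _ hD1C'
  have hD2e := entry1 _ hD2C'
  have hDel : ∀ p j, |Dseq (t+1) p j - Dseq t p j| ≤ N := by
    intro p j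
    rw [hNdef, ← Real.sqrt_sq_eq_abs]
    apply Real.sqrt_le_sqrt
    calc (Dseq (t+1) p j - Dseq t p j)^2
        ≤ ∑ j', (Dseq (t+1) p j' - Dseq t p j')^2 :=
          Finset.single_le_sum (f := fun j' => (Dseq (t+1) p j' - Dseq t p j')^2)
            (fun j' _ => sq_nonneg _) (Finset.mem_univ j)
      _ ≤ ∑ i, ∑ j', (Dseq (t+1) i j' - Dseq t i j')^2 :=
          Finset.single_le_sum (f := fun i => ∑ j', (Dseq (t+1) i j' - Dseq t i j')^2)
            (fun i _ => Finset.sum_nonneg fun j' _ => sq_nonneg _) (Finset.mem_univ p)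
  -- scalar form of fhat
  have hf : ∀ (s:ℕ) (D : Matrix (Fin m) (Fin k) ℝ), fhat s D =
      (1/(s:ℝ)) * ((1/2) * (∑ j, ∑ j', (∑ p, D p j * D p j') * A s j' j)
        - ∑ j, ∑ p, D p j * B s p j) := by
    intro s D
    rw [hfhat]
    simp [Matrix.trace, Matrix.diag, Matrix.mul_apply]
  have hAsym : ∀ (s:ℕ) (j j' : Fin k), A s j' j = A s j j' := by
    intro s j j'; rw [hA, hA]; exact Finset.sum_congr rfl fun i _ => mul_comm _ _
  -- midpoint
  set Mid : Matrix (Fin m) (Fin k) ℝ :=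
    Matrix.of (fun p j => (Dseq t p j + Dseq (t+1) p j)/2) with hMid
  have hMide : ∀ p j, Mid p j = (Dseq t p j + Dseq (t+1) p j)/2 := fun p j => rfl
  have hMidC : Mid ∈ C := by
    rw [hC]
    intro j
    have h1 := hD1C' j; have h2 := hD2C' j
    have key : ∑ i, (Mid i j)^2 ≤ (∑ i, (Dseq t i j)^2 + ∑ i, (Dseq (t+1) i j)^2)/2 := by
      rw [← Finset.sum_add_distrib, Finset.sum_div]
      refine Finset.sum_le_sum fun i _ => ?_
      rw [hMide]
      nlinarith [sq_nonneg (Dseq t i j - Dseq (t+1) i j)]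
    linarith
  -- strong convexity via midpoint
  have hTM : (∑ j, ∑ j', (∑ p, Mid p j * Mid p j') * A t j' j)
      = ((∑ j, ∑ j', (∑ p, Dseq t p j * Dseq t p j') * A t j' j)
        + (∑ j, ∑ j', (∑ p, Dseq (t+1) p j * Dseq (t+1) p j') * A t j' j))/2
        - (∑ j, ∑ j', (∑ p, (Dseq (t+1) p j - Dseq t p j) * (Dseq (t+1) p j' - Dseq t p j'))
            * A t j' j)/4 := by
    simp only [hMide, Finset.sum_mul, add_div, sub_div, Finset.sum_div,
      ← Finset.sum_add_distrib, ← Finset.sum_sub_distrib]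
    refine Finset.sum_congr rfl fun j _ => ?_
    refine Finset.sum_congr rfl fun j' _ => ?_
    refine Finset.sum_congr rfl fun p _ => ?_
    ring
  have hUM : (∑ j, ∑ p, Mid p j * B t p j)
      = ((∑ j, ∑ p, Dseq t p j * B t p j) + (∑ j, ∑ p, Dseq (t+1) p j * B t p j))/2 := by
    simp only [hMide, add_div, Finset.sum_div, ← Finset.sum_add_distrib]
    refine Finset.sum_congr rfl fun j _ => ?_
    refine Finset.sum_congr rfl fun p _ => ?_
    ring
  -- lower bound on the quadratic form
  have hQflat : (∑ j, ∑ j', (∑ p, (Dseq (t+1) p j - Dseq t p j) * (Dseq (t+1) p j' - Dseq t p j'))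
        * A t j' j)
      = ∑ p, ∑ j, ∑ j', (Dseq (t+1) p j - Dseq t p j) * A t j j' * (Dseq (t+1) p j' - Dseq t p j') := by
    simp only [Finset.sum_mul]
    calc (∑ j, ∑ j', ∑ p, (Dseq (t+1) p j - Dseq t p j) * (Dseq (t+1) p j' - Dseq t p j') * A t j' j)
        = ∑ j, ∑ p, ∑ j', (Dseq (t+1) p j - Dseq t p j) * (Dseq (t+1) p j' - Dseq t p j') * A t j' j :=
          Finset.sum_congr rfl fun j _ => Finset.sum_comm
      _ = ∑ p, ∑ j, ∑ j', (Dseq (t+1) p j - Dseq t p j) * (Dseq (t+1) p j' - Dseq t p j') * A t j' j :=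
          Finset.sum_comm
      _ = _ := by
          refine Finset.sum_congr rfl fun p _ => ?_
          refine Finset.sum_congr rfl fun j _ => ?_
          refine Finset.sum_congr rfl fun j' _ => ?_
          rw [hAsym t j j']; ring
  have hQlow : (t:ℝ)*κ₁*N^2 ≤
      ∑ j, ∑ j', (∑ p, (Dseq (t+1) p j - Dseq t p j) * (Dseq (t+1) p j' - Dseq t p j'))
        * A t j' j := by
    rw [hQflat, hNsq, Finset.mul_sum]
    exact Finset.sum_le_sum fun p _ => heig t ht (fun j => Dseq (t+1) p j - Dseq t p j)
  -- strong convexity inequality (unscaled)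
  have hmid : fhat t (Dseq t) ≤ fhat t Mid := hD1min Mid hMidC
  rw [hf t (Dseq t), hf t Mid] at hmid
  have h10 : (0:ℝ) < 1/(t:ℝ) := by positivity
  have h4 := (mul_le_mul_iff_right₀ h10).mp hmid
  rw [hTM, hUM] at h4
  have h5 : (∑ j, ∑ j', (∑ p, (Dseq (t+1) p j - Dseq t p j) * (Dseq (t+1) p j' - Dseq t p j'))
        * A t j' j)/4
      ≤ ((1/2) * (∑ j, ∑ j', (∑ p, Dseq (t+1) p j * Dseq (t+1) p j') * A t j' j)
          - ∑ j, ∑ p, Dseq (t+1) p j * B t p j)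
        - ((1/2) * (∑ j, ∑ j', (∑ p, Dseq t p j * Dseq t p j') * A t j' j)
          - ∑ j, ∑ p, Dseq t p j * B t p j) := by linarith
  have h6 : κ₁*N^2/4 ≤ fhat t (Dseq (t+1)) - fhat t (Dseq t) := by
    rw [hf t (Dseq (t+1)), hf t (Dseq t)]
    calc κ₁*N^2/4 = (1/(t:ℝ))*((t:ℝ)*κ₁*N^2/4) := by field_simp
      _ ≤ (1/(t:ℝ))*(((1/2) * (∑ j, ∑ j', (∑ p, Dseq (t+1) p j * Dseq (t+1) p j') * A t j' j)
          - ∑ j, ∑ p, Dseq (t+1) p j * B t p j)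
        - ((1/2) * (∑ j, ∑ j', (∑ p, Dseq t p j * Dseq t p j') * A t j' j)
          - ∑ j, ∑ p, Dseq t p j * B t p j)) := by
          apply mul_le_mul_of_nonneg_left _ h10.le
          linarith
      _ = _ := by ring
  have h1 : fhat (t+1) (Dseq (t+1)) ≤ fhat (t+1) (Dseq t) := hD2min _ hD1C
  have hlow : κ₁*N^2/4 ≤ (fhat t (Dseq (t+1)) - fhat (t+1) (Dseq (t+1)))
      - (fhat t (Dseq t) - fhat (t+1) (Dseq t)) := by linarith
  -- bounds on A and B entries
  have hAstep : ∀ j j' : Fin k, A (t+1) j j' = A t j j' + α (t+1) j * α (t+1) j' := by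
    intro j j'
    rw [hA, hA, Finset.sum_Icc_succ_top (by omega : 1 ≤ t + 1)]
  have hBstep : ∀ (p : Fin m) (j : Fin k), B (t+1) p j = B t p j + x (t+1) p * α (t+1) j := by
    intro p j
    rw [hB, hB, Finset.sum_Icc_succ_top (by omega : 1 ≤ t + 1)]
  have hAbound : ∀ j j' : Fin k, |A t j j'| ≤ (t:ℝ) * M^2 := by
    intro j j'
    have hM0 : 0 ≤ M := le_trans (abs_nonneg _) ((hbound 0).2 j)
    rw [hA]
    calc |∑ i ∈ Finset.Icc 1 t, α i j * α i j'| ≤ ∑ i ∈ Finset.Icc 1 t, |α i j * α i j'| :=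
          Finset.abs_sum_le_sum_abs _ _
      _ ≤ ∑ i ∈ Finset.Icc 1 t, M^2 := Finset.sum_le_sum fun i _ => by
          rw [abs_mul, sq]
          exact mul_le_mul ((hbound i).2 j) ((hbound i).2 j') (abs_nonneg _) hM0
      _ = (t:ℝ)*M^2 := by
          rw [Finset.sum_const, Nat.card_Icc]
          simp [nsmul_eq_mul]
  have hBbound : ∀ (p : Fin m) (j : Fin k), |B t p j| ≤ (t:ℝ) * M^2 := by
    intro p j
    have hM0 : 0 ≤ M := le_trans (abs_nonneg _) ((hbound 0).2 j)
    rw [hB]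
    calc |∑ i ∈ Finset.Icc 1 t, x i p * α i j| ≤ ∑ i ∈ Finset.Icc 1 t, |x i p * α i j| :=
          Finset.abs_sum_le_sum_abs _ _
      _ ≤ ∑ i ∈ Finset.Icc 1 t, M^2 := Finset.sum_le_sum fun i _ => by
          rw [abs_mul, sq]
          exact mul_le_mul ((hbound i).1 p) ((hbound i).2 j) (abs_nonneg _) hM0
      _ = (t:ℝ)*M^2 := by
          rw [Finset.sum_const, Nat.card_Icc]
          simp [nsmul_eq_mul]
  have hdiffbound : ∀ (X a : ℝ), |X| ≤ (t:ℝ)*M^2 → |a| ≤ M^2 →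
      |(1/(t:ℝ))*X - (1/((t:ℝ)+1))*(X + a)| ≤ 2*M^2/(t:ℝ) :=
    fun X a hX ha => aux_diff_bound (t:ℝ) M X a ht1 hX ha
  have hAtil : ∀ j j' : Fin k,
      |(1/(t:ℝ))*A t j j' - (1/((t:ℝ)+1))*A (t+1) j j'| ≤ 2*M^2/(t:ℝ) := by
    intro j j'
    have hM0 : 0 ≤ M := le_trans (abs_nonneg _) ((hbound 0).2 j)
    rw [hAstep]
    refine hdiffbound _ _ (hAbound j j') ?_
    rw [abs_mul, sq]
    exact mul_le_mul ((hbound (t+1)).2 j) ((hbound (t+1)).2 j') (abs_nonneg _) hM0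
  have hBtil : ∀ (p : Fin m) (j : Fin k),
      |(1/(t:ℝ))*B t p j - (1/((t:ℝ)+1))*B (t+1) p j| ≤ 2*M^2/(t:ℝ) := by
    intro p j
    have hM0 : 0 ≤ M := le_trans (abs_nonneg _) ((hbound 0).2 j)
    rw [hBstep]
    refine hdiffbound _ _ (hBbound p j) ?_
    rw [abs_mul, sq]
    exact mul_le_mul ((hbound (t+1)).1 p) ((hbound (t+1)).2 j) (abs_nonneg _) hM0
  -- the difference identity
  have hSA : (1/(t:ℝ))*(∑ j, ∑ j', (∑ p, Dseq (t+1) p j * Dseq (t+1) p j') * A t j' j)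
         - (1/((t:ℝ)+1))*(∑ j, ∑ j', (∑ p, Dseq (t+1) p j * Dseq (t+1) p j') * A (t+1) j' j)
         - ((1/(t:ℝ))*(∑ j, ∑ j', (∑ p, Dseq t p j * Dseq t p j') * A t j' j)
         - (1/((t:ℝ)+1))*(∑ j, ∑ j', (∑ p, Dseq t p j * Dseq t p j') * A (t+1) j' j))
      = ∑ j, ∑ j', ∑ p, (Dseq (t+1) p j * Dseq (t+1) p j' - Dseq t p j * Dseq t p j')
          * ((1/(t:ℝ))*A t j' j - (1/((t:ℝ)+1))*A (t+1) j' j) := by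
    simp only [Finset.mul_sum, Finset.sum_mul, sub_mul, mul_sub, ← Finset.sum_sub_distrib]
    refine Finset.sum_congr rfl fun j _ => ?_
    refine Finset.sum_congr rfl fun j' _ => ?_
    refine Finset.sum_congr rfl fun p _ => ?_
    ring
  have hSB : (1/(t:ℝ))*(∑ j, ∑ p, Dseq (t+1) p j * B t p j)
         - (1/((t:ℝ)+1))*(∑ j, ∑ p, Dseq (t+1) p j * B (t+1) p j)
         - ((1/(t:ℝ))*(∑ j, ∑ p, Dseq t p j * B t p j)
         - (1/((t:ℝ)+1))*(∑ j, ∑ p, Dseq t p j * B (t+1) p j))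
      = ∑ j, ∑ p, (Dseq (t+1) p j - Dseq t p j)
          * ((1/(t:ℝ))*B t p j - (1/((t:ℝ)+1))*B (t+1) p j) := by
    simp only [Finset.mul_sum, Finset.sum_mul, sub_mul, mul_sub, ← Finset.sum_sub_distrib]
    refine Finset.sum_congr rfl fun j _ => ?_
    refine Finset.sum_congr rfl fun p _ => ?_
    ring
  have hG : (fhat t (Dseq (t+1)) - fhat (t+1) (Dseq (t+1)))
      - (fhat t (Dseq t) - fhat (t+1) (Dseq t))
      = (1/2)*(∑ j, ∑ j', ∑ p, (Dseq (t+1) p j * Dseq (t+1) p j' - Dseq t p j * Dseq t p j')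
          * ((1/(t:ℝ))*A t j' j - (1/((t:ℝ)+1))*A (t+1) j' j))
        - ∑ j, ∑ p, (Dseq (t+1) p j - Dseq t p j)
          * ((1/(t:ℝ))*B t p j - (1/((t:ℝ)+1))*B (t+1) p j) := by
    rw [hf t (Dseq (t+1)), hf (t+1) (Dseq (t+1)), hf t (Dseq t), hf (t+1) (Dseq t)]
    push_cast
    linear_combination (1/2 : ℝ) * hSA - hSB
  -- upper bounds
  have hSAbound : (∑ j, ∑ j', ∑ p, (Dseq (t+1) p j * Dseq (t+1) p j' - Dseq t p j * Dseq t p j')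
          * ((1/(t:ℝ))*A t j' j - (1/((t:ℝ)+1))*A (t+1) j' j))
      ≤ (k:ℝ)*(k:ℝ)*(m:ℝ)*(2*N*(2*M^2/(t:ℝ))) := by
    calc _ ≤ ∑ j : Fin k, ∑ j' : Fin k, ∑ p : Fin m, 2*N*(2*M^2/(t:ℝ)) := by
          refine Finset.sum_le_sum fun j _ => Finset.sum_le_sum fun j' _ =>
            Finset.sum_le_sum fun p _ => ?_
          refine le_trans (le_abs_self _) ?_
          rw [abs_mul]
          have h2N : |Dseq (t+1) p j * Dseq (t+1) p j' - Dseq t p j * Dseq t p j'| ≤ 2*N := by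
            have e : Dseq (t+1) p j * Dseq (t+1) p j' - Dseq t p j * Dseq t p j'
                = (Dseq (t+1) p j - Dseq t p j) * Dseq (t+1) p j'
                  + Dseq t p j * (Dseq (t+1) p j' - Dseq t p j') := by ring
            rw [e]
            refine le_trans (abs_add_le _ _) ?_
            rw [abs_mul, abs_mul]
            have b1 : |Dseq (t+1) p j - Dseq t p j| * |Dseq (t+1) p j'| ≤ N*1 :=
              mul_le_mul (hDel p j) (hD2e p j') (abs_nonneg _) hN0
            have b2 : |Dseq t p j| * |Dseq (t+1) p j' - Dseq t p j'| ≤ 1*N :=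
              mul_le_mul (hD1e p j) (hDel p j') (abs_nonneg _) zero_le_one
            linarith
          exact mul_le_mul h2N (hAtil j' j) (abs_nonneg _) (by linarith [hN0])
      _ = (k:ℝ)*(k:ℝ)*(m:ℝ)*(2*N*(2*M^2/(t:ℝ))) := by
          simp [Finset.sum_const, Finset.card_univ, nsmul_eq_mul]
          ring
  have hSBbound : -(∑ j, ∑ p, (Dseq (t+1) p j - Dseq t p j)
          * ((1/(t:ℝ))*B t p j - (1/((t:ℝ)+1))*B (t+1) p j))
      ≤ (k:ℝ)*(m:ℝ)*(N*(2*M^2/(t:ℝ))) := by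
    calc _ ≤ |∑ j, ∑ p, (Dseq (t+1) p j - Dseq t p j)
          * ((1/(t:ℝ))*B t p j - (1/((t:ℝ)+1))*B (t+1) p j)| := neg_le_abs _
      _ ≤ ∑ j : Fin k, ∑ p : Fin m, N*(2*M^2/(t:ℝ)) := by
          refine le_trans (Finset.abs_sum_le_sum_abs _ _) (Finset.sum_le_sum fun j _ => ?_)
          refine le_trans (Finset.abs_sum_le_sum_abs _ _) (Finset.sum_le_sum fun p _ => ?_)
          rw [abs_mul]
          exact mul_le_mul (hDel p j) (hBtil p j) (abs_nonneg _) hN0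
      _ = (k:ℝ)*(m:ℝ)*(N*(2*M^2/(t:ℝ))) := by
          simp [Finset.sum_const, Finset.card_univ, nsmul_eq_mul]
          ring
  -- combine
  rw [hG] at hlow
  have hmain : κ₁*N^2/4 ≤ (1/2)*((k:ℝ)*(k:ℝ)*(m:ℝ)*(2*N*(2*M^2/(t:ℝ))))
      + (k:ℝ)*(m:ℝ)*(N*(2*M^2/(t:ℝ))) := by linarith
  have hmain2 : κ₁*N^2*(t:ℝ) ≤ 8*M^2*(m:ℝ)*(k:ℝ)*((k:ℝ)+1)*N := by
    have h := mul_le_mul_of_nonneg_left hmain (by positivity : (0:ℝ) ≤ 4*(t:ℝ))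
    calc κ₁*N^2*(t:ℝ) = 4*(t:ℝ)*(κ₁*N^2/4) := by ring
      _ ≤ 4*(t:ℝ)*((1/2)*((k:ℝ)*(k:ℝ)*(m:ℝ)*(2*N*(2*M^2/(t:ℝ))))
          + (k:ℝ)*(m:ℝ)*(N*(2*M^2/(t:ℝ)))) := h
      _ = 8*M^2*(m:ℝ)*(k:ℝ)*((k:ℝ)+1)*N := by field_simp; ring
  by_cases hNz : N = 0
  · rw [hNz]
    have h8 : (0:ℝ) ≤ 8*M^2*(m:ℝ)*(k:ℝ)*((k:ℝ)+1) := by positivity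
    exact div_nonneg (div_nonneg h8 hκ₁.le) ht0.le
  · have hNpos : 0 < N := lt_of_le_of_ne hN0 (Ne.symm hNz)
    rw [div_div, le_div_iff₀ (mul_pos hκ₁ ht0)]
    nlinarith [hmain2, hNpos]
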